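/- Let T be a finite tree of order n and let k be an integer. If S is a global defensive k-alliance in T such that the subgraph induced by S has exactly c connected components, then (3 − k)·|S| ≥ n + 2c; in particular |S| ≥ ⌈(n + 2c)/(3 − k)⌉ when k < 3. -/

import Mathlib

/-- Number of neighbors that `v` has in `S`. -/
noncomputable def SimpleGraph.nbrCount {V : Type*} (G : SimpleGraph V) (S : Set V) (v : V) : ℕ :=
  (S ∩ {u | G.Adj v u}).ncard

/-- Degree of a vertex, counted via `ncard`. -/
noncomputable def SimpleGraph.degN {V : Type*} (G : SimpleGraph V) (v : V) : ℕ :=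
  {u | G.Adj v u}.ncard

/-- `S` is a defensive `k`-alliance. -/
def SimpleGraph.IsDefensiveAlliance {V : Type*} (G : SimpleGraph V) (k : ℤ) (S : Set V) : Prop :=
  S.Nonempty ∧ ∀ v ∈ S, (G.nbrCount Sᶜ v : ℤ) + k ≤ (G.nbrCount S v : ℤ)

/-- `S` is a dominating set. -/
def SimpleGraph.IsDominating {V : Type*} (G : SimpleGraph V) (S : Set V) : Prop :=
  ∀ v ∈ Sᶜ, ∃ u ∈ S, G.Adj v u

/-- `S` is a global defensive `k`-alliance. -/
def SimpleGraph.IsGlobalDefensiveAlliance {V : Type*} (G : SimpleGraph V) (k : ℤ) (S : Set V) : Prop :=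
  G.IsDefensiveAlliance k S ∧ G.IsDominating S

/-- Global defensive `k`-alliance number. -/
noncomputable def SimpleGraph.globalDefensiveAllianceNumber {V : Type*} (G : SimpleGraph V) (k : ℤ) : ℕ :=
  sInf {m | ∃ S : Set V, G.IsGlobalDefensiveAlliance k S ∧ S.ncard = m}



open SimpleGraph Finset

lemma induce_acyclic {V : Type*} {G : SimpleGraph V} (h : G.IsAcyclic) (s : Set V) :
    (G.induce s).IsAcyclic := by
  intro v w hw
  have emb := SimpleGraph.Embedding.induce (G := G) s
  exact h (w.map emb.toHom) (hw.map emb.injective)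

lemma reachable_of_mem_support' {V : Type*} {G : SimpleGraph V} {a b w : V} (p : G.Walk a b)
    (hw : w ∈ p.support) : G.Reachable a w := by
  classical
  exact (p.takeUntil w hw).reachable

lemma connected_induce_supp {V : Type*} (G : SimpleGraph V) (c : G.ConnectedComponent) :
    (G.induce c.supp).Connected := by
  obtain ⟨v, hv⟩ := c.exists_rep
  rw [SimpleGraph.connected_iff]
  refine ⟨?_, ⟨⟨v, by simp only [SimpleGraph.ConnectedComponent.mem_supp_iff]; exact hv⟩⟩⟩
  rintro ⟨a, ha⟩ ⟨b, hb⟩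
  rw [SimpleGraph.ConnectedComponent.mem_supp_iff] at ha hb
  have hr : G.Reachable a b := SimpleGraph.ConnectedComponent.exact (ha.trans hb.symm)
  obtain ⟨p⟩ := hr
  have hsub : Set.MapsTo id {v | v ∈ p.support} c.supp := by
    intro w hw
    have h2 := reachable_of_mem_support' p hw
    simp only [SimpleGraph.ConnectedComponent.mem_supp_iff, ← ha]
    exact (SimpleGraph.ConnectedComponent.sound h2).symm
  have hc := SimpleGraph.Walk.connected_induce_support p
  have hr2 := hc.preconnected ⟨a, by simp⟩ ⟨b, by simp⟩
  have h3 := hr2.map (SimpleGraph.induceHom (SimpleGraph.Hom.id) hsub)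
  convert h3 using 2 <;> rfl

lemma mem_supp_of_adj {W : Type*} {H : SimpleGraph W} {c : H.ConnectedComponent}
    {v : ↥c.supp} {u : W} (h : H.Adj ↑v u) : u ∈ c.supp := by
  rw [SimpleGraph.ConnectedComponent.mem_supp_iff,
    ← (SimpleGraph.ConnectedComponent.mem_supp_iff c ↑v).mp v.2]
  exact (SimpleGraph.ConnectedComponent.eq ..).mpr (h.symm.reachable)

def nbrEquiv {W : Type*} (H : SimpleGraph W) (c : H.ConnectedComponent) (v : ↥c.supp) :
    ((H.induce c.supp).neighborSet v) ≃ (H.neighborSet (↑v : W)) where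
  toFun u := ⟨↑u.1, u.2⟩
  invFun u := ⟨⟨u.1, mem_supp_of_adj u.2⟩, u.2⟩
  left_inv _ := rfl
  right_inv _ := rfl

lemma comp_sum {W : Type*} [Fintype W] (H : SimpleGraph W) (hac : H.IsAcyclic)
    (c : H.ConnectedComponent) [Fintype ↥c.supp] :
    ∑ v : ↥c.supp, Nat.card (H.neighborSet ↑v) + 2 = 2 * Fintype.card ↥c.supp := by
  classical
  have htree : (H.induce c.supp).IsTree := ⟨connected_induce_supp H c, induce_acyclic hac _⟩
  have h1 : ∀ v : ↥c.supp, Nat.card (H.neighborSet ↑v) = (H.induce c.supp).degree v := by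
    intro v
    rw [← SimpleGraph.card_neighborSet_eq_degree, ← Nat.card_eq_fintype_card]
    exact Nat.card_congr (nbrEquiv H c v).symm
  have h2 : ∑ v : ↥c.supp, Nat.card (H.neighborSet ↑v)
      = 2 * (H.induce c.supp).edgeFinset.card := by
    rw [← SimpleGraph.sum_degrees_eq_twice_card_edges]
    exact Finset.sum_congr rfl fun v _ => h1 v
  have h3 := htree.card_edgeFinset
  omega

lemma sum_deg_forest {W : Type*} [Fintype W] (H : SimpleGraph W) (hac : H.IsAcyclic) :
    ∑ v, Nat.card (H.neighborSet v) + 2 * Nat.card H.ConnectedComponent = 2 * Fintype.card W := by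
  classical
  have key : ∀ (f : W → ℕ), ∑ c : H.ConnectedComponent, ∑ v : ↥c.supp, f ↑v = ∑ v, f v := by
    intro f
    rw [← Finset.sum_fiberwise_of_maps_to (g := H.connectedComponentMk)
      (fun i _ => Finset.mem_univ _) f]
    refine Finset.sum_congr rfl fun c _ => ?_
    rw [← Finset.sum_subtype (univ.filter (H.connectedComponentMk · = c)) (p := (· ∈ c.supp))
      (fun x => by simp [SimpleGraph.ConnectedComponent.mem_supp_iff])]
  have e1 := key fun v => Nat.card (H.neighborSet v)
  have e2 := key fun _ => 1
  simp only [Finset.sum_const, smul_eq_mul, mul_one, Finset.card_univ] at e2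
  have e3 : ∑ c : H.ConnectedComponent,
      (∑ v : ↥c.supp, Nat.card (H.neighborSet ↑v) + 2) =
      ∑ c : H.ConnectedComponent, 2 * Fintype.card ↥c.supp :=
    Finset.sum_congr rfl fun c _ => comp_sum H hac c
  rw [Finset.sum_add_distrib, Finset.sum_const, ← Finset.mul_sum] at e3
  simp only [smul_eq_mul, Finset.card_univ] at e3
  rw [Nat.card_eq_fintype_card, ← e1, ← e2, mul_comm 2 (Fintype.card H.ConnectedComponent)]
  exact e3

theorem global_defensive_alliance_tree_components {V : Type*} [Fintype V]
    (G : SimpleGraph V) (hT : G.Connected) (hac : G.IsAcyclic)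
    (k : ℤ) (S : Set V) (hS : G.IsGlobalDefensiveAlliance k S)
    (c : ℕ) (hc : Nat.card (G.induce S).ConnectedComponent = c) :
    (Fintype.card V : ℤ) + 2 * c ≤ (3 - k) * (S.ncard : ℤ) ∧
      (k < 3 → ⌈((Fintype.card V : ℚ) + 2 * c) / (3 - (k : ℚ))⌉ ≤ (S.ncard : ℤ)) := by
  classical
  obtain ⟨⟨hne, hall⟩, hdom⟩ := hS
  set n := Fintype.card V with hn
  obtain ⟨F, hF⟩ : ∃ F : Finset V, ∀ v, v ∈ F ↔ v ∈ S :=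
    ⟨S.toFinset, fun v => Set.mem_toFinset⟩
  have hFS : (F : Set V) = S := Set.ext fun v => by simp [hF]
  -- counting lemmas
  have hcntS : ∀ v, G.nbrCount S v = (F.filter (fun u => G.Adj v u)).card := by
    intro v
    rw [SimpleGraph.nbrCount, Set.ncard_eq_toFinset_card']
    apply Finset.card_bij (fun a _ => a) <;>
      simp +contextual [Set.mem_toFinset, hF]
  have hcntC : ∀ v, G.nbrCount Sᶜ v = (Fᶜ.filter (fun u => G.Adj v u)).card := by
    intro v
    rw [SimpleGraph.nbrCount, Set.ncard_eq_toFinset_card']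
    apply Finset.card_bij (fun a _ => a) <;>
      simp +contextual [Set.mem_toFinset, hF]
  have hcard : F.card = S.ncard := by rw [← hFS, Set.ncard_coe_finset]
  -- symmetric double counting
  have hXY : ∑ v ∈ Fᶜ, G.nbrCount S v = ∑ v ∈ F, G.nbrCount Sᶜ v := by
    simp only [hcntS, hcntC, Finset.card_filter]
    rw [Finset.sum_comm]
    refine Finset.sum_congr rfl fun u hu => Finset.sum_congr rfl fun v hv => ?_
    simp [G.adj_comm]
  -- domination
  have hdomX : (n : ℤ) ≤ (∑ v ∈ Fᶜ, G.nbrCount S v : ℕ) + (S.ncard : ℤ) := by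
    have h1 : ∀ v ∈ Fᶜ, 1 ≤ G.nbrCount S v := by
      intro v hv
      have hv' : v ∈ Sᶜ := by
        rw [Set.mem_compl_iff, ← hF]
        exact Finset.mem_compl.mp hv
      obtain ⟨u, hu, hadj⟩ := hdom v hv'
      exact Set.ncard_pos (Set.toFinite _) |>.mpr ⟨u, hu, hadj⟩
    have h2 : Fᶜ.card ≤ ∑ v ∈ Fᶜ, G.nbrCount S v := by
      calc Fᶜ.card = ∑ _v ∈ Fᶜ, 1 := by simp
        _ ≤ _ := Finset.sum_le_sum h1
    have h3 : Fᶜ.card + F.card = n := by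
      rw [Finset.card_compl]
      have := F.card_le_univ
      omega
    have h4 : n ≤ (∑ v ∈ Fᶜ, G.nbrCount S v) + F.card := by omega
    calc (n : ℤ) ≤ ((∑ v ∈ Fᶜ, G.nbrCount S v) + F.card : ℕ) := by exact_mod_cast h4
      _ = _ := by rw [hcard]; push_cast; ring
  -- alliance inequality
  have halli : (∑ v ∈ F, G.nbrCount Sᶜ v : ℕ) + k * (S.ncard : ℤ)
      ≤ (∑ v ∈ F, G.nbrCount S v : ℕ) := by
    have h1 : ∑ v ∈ F, ((G.nbrCount Sᶜ v : ℤ) + k)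
        ≤ ∑ v ∈ F, (G.nbrCount S v : ℤ) :=
      Finset.sum_le_sum fun v hv => hall v ((hF v).mp hv)
    rw [Finset.sum_add_distrib, Finset.sum_const] at h1
    push_cast
    rw [← hcard]
    push_cast at h1
    simpa [mul_comm] using h1
  -- forest degree sum
  have hforest := sum_deg_forest (G.induce S) (induce_acyclic hac S)
  have hlink : ∀ v : ↥S, Nat.card ((G.induce S).neighborSet v) = G.nbrCount S ↑v := by
    intro v
    rw [SimpleGraph.nbrCount, ← Nat.card_coe_set_eq]
    refine Nat.card_congr ⟨fun u => ⟨↑u.1, u.1.2, u.2⟩, fun u => ⟨⟨↑u, u.2.1⟩, u.2.2⟩,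
      fun _ => rfl, fun _ => rfl⟩
  have hsub : ∑ v : ↥S, G.nbrCount S ↑v = ∑ v ∈ F, G.nbrCount S v :=
    (Finset.sum_subtype F hF _).symm
  have hScard : Fintype.card ↥S = S.ncard := by
    rw [← Nat.card_coe_set_eq, Nat.card_eq_fintype_card]
  rw [hc, Fintype.sum_congr _ _ hlink, hsub, hScard] at hforest
  -- combine
  have hmain : (n : ℤ) + 2 * c ≤ (3 - k) * (S.ncard : ℤ) := by
    have hf : ((∑ v ∈ F, G.nbrCount S v : ℕ) : ℤ) + 2 * c = 2 * S.ncard := by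
      exact_mod_cast congrArg Nat.cast hforest
    rw [hXY] at hdomX
    linarith
  refine ⟨hmain, fun hk => ?_⟩
  rw [Int.ceil_le]
  have hk3 : (0 : ℚ) < 3 - (k : ℚ) := by
    have : (k : ℚ) < 3 := by exact_mod_cast hk
    linarith
  rw [div_le_iff₀ hk3]
  have hq : ((n : ℚ) + 2 * c) ≤ (3 - (k : ℚ)) * (S.ncard : ℚ) := by exact_mod_cast hmain
  push_cast
  linarith
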